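/- Let n ≥ 4 and let ℋ be a generic n × n half-grid in ℝ², given by sets {a₀ < a₁ < ⋯ < a_{n−1}} and {b₀ < b₁ < ⋯ < b_{n−1}} as ℋ = {(aᵢ, bⱼ) : i + j ≤ n − 1}, with vertex V = (a₀, b₀); here generic means every line in ℝ² that is not parallel to the x-axis or y-axis passes through at most 2 points of ℋ. Then for every positive integer k, any finite multiset of lines in ℝ², none of which passes through V, that covers every point of ℋ ∖ {V} at least k times has size at least (3nk)/2 − 2k. -/
import Mathlib


open scoped Classical

/-- `IsOnLine l p` means that the point `p : ℝ × ℝ` lies on the line with coefficient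
triple `l = (u, v, c)`, i.e. on `{(x, y) | u * x + v * y = c}`. -/
def IsOnLine (l : ℝ × ℝ × ℝ) (p : ℝ × ℝ) : Prop :=
  l.1 * p.1 + l.2.1 * p.2 = l.2.2

theorem stmt_5 (n : ℕ) (hn : 4 ≤ n) (a b : ℕ → ℝ)
    -- a₀ < a₁ < ⋯ < a_{n-1} and b₀ < b₁ < ⋯ < b_{n-1}
    (ha : ∀ i j : ℕ, i < j → j < n → a i < a j)
    (hb : ∀ i j : ℕ, i < j → j < n → b i < b j)
    -- the n × n half-grid ℋ = {(aᵢ, bⱼ) : i + j ≤ n - 1}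
    (H : Finset (ℝ × ℝ))
    (hH : H = ((Finset.range n ×ˢ Finset.range n).filter
      (fun q => q.1 + q.2 ≤ n - 1)).image (fun q => (a q.1, b q.2)))
    -- genericity: every line not parallel to the x-axis or y-axis passes through
    -- at most 2 points of ℋ
    (hgen : ∀ u v c : ℝ, u ≠ 0 → v ≠ 0 →
      (H.filter (fun p => u * p.1 + v * p.2 = c)).card ≤ 2)
    (k : ℕ) (hk : 0 < k)
    (L : Multiset (ℝ × ℝ × ℝ))
    (hL : ∀ l ∈ L, (l.1, l.2.1) ≠ ((0 : ℝ), (0 : ℝ)))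
    -- no line of L passes through the vertex V = (a₀, b₀)
    (hmiss : ∀ l ∈ L, ¬ IsOnLine l (a 0, b 0))
    -- L covers every point of ℋ ∖ {V} at least k times
    (hcover : ∀ p ∈ H, p ≠ (a 0, b 0) → k ≤ L.countP (fun l => IsOnLine l p)) :
    3 * (n : ℝ) * (k : ℝ) / 2 - 2 * (k : ℝ) ≤ (Multiset.card L : ℝ) := by
  -- injectivity of a and b on [0, n)
  have hainj : ∀ i j : ℕ, i < n → j < n → a i = a j → i = j := by
    intro i j hi hj hij
    rcases lt_trichotomy i j with h | h | h
    · exact absurd hij (ne_of_lt (ha i j h hj))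
    · exact h
    · exact absurd hij.symm (ne_of_lt (ha j i h hi))
  have hbinj : ∀ i j : ℕ, i < n → j < n → b i = b j → i = j := by
    intro i j hi hj hij
    rcases lt_trichotomy i j with h | h | h
    · exact absurd hij (ne_of_lt (hb i j h hj))
    · exact h
    · exact absurd hij.symm (ne_of_lt (hb j i h hi))
  -- the three special point sets
  set B : Finset (ℝ × ℝ) := (Finset.Icc 1 (n-1)).image (fun i => (a i, b 0)) with hBdef
  set C : Finset (ℝ × ℝ) := (Finset.Icc 1 (n-1)).image (fun j => (a 0, b j)) with hCdef
  set D : Finset (ℝ × ℝ) := (Finset.range n).image (fun i => (a i, b (n-1-i))) with hDdef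
  set S : Finset (ℝ × ℝ) := B ∪ C ∪ D with hSdef
  have hBmem : ∀ p ∈ B, ∃ i, 1 ≤ i ∧ i ≤ n - 1 ∧ p = (a i, b 0) := by
    intro p hp
    simp only [hBdef, Finset.mem_image, Finset.mem_Icc] at hp
    obtain ⟨i, ⟨h1, h2⟩, h3⟩ := hp
    exact ⟨i, h1, h2, h3.symm⟩
  have hCmem : ∀ p ∈ C, ∃ j, 1 ≤ j ∧ j ≤ n - 1 ∧ p = (a 0, b j) := by
    intro p hp
    simp only [hCdef, Finset.mem_image, Finset.mem_Icc] at hp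
    obtain ⟨j, ⟨h1, h2⟩, h3⟩ := hp
    exact ⟨j, h1, h2, h3.symm⟩
  have hDmem : ∀ p ∈ D, ∃ i, i < n ∧ p = (a i, b (n-1-i)) := by
    intro p hp
    simp only [hDdef, Finset.mem_image, Finset.mem_range] at hp
    obtain ⟨i, h1, h3⟩ := hp
    exact ⟨i, h1, h3.symm⟩
  -- S ⊆ H
  have hSsubH : S ⊆ H := by
    intro p hp
    rw [hH]
    simp only [Finset.mem_image, Finset.mem_filter, Finset.mem_product, Finset.mem_range]
    simp only [hSdef, Finset.mem_union] at hp
    rcases hp with (hp | hp) | hp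
    · obtain ⟨i, h1, h2, h3⟩ := hBmem p hp
      exact ⟨(i, 0), ⟨⟨by omega, by omega⟩, by omega⟩, by rw [h3]⟩
    · obtain ⟨j, h1, h2, h3⟩ := hCmem p hp
      exact ⟨(0, j), ⟨⟨by omega, by omega⟩, by omega⟩, by rw [h3]⟩
    · obtain ⟨i, h1, h3⟩ := hDmem p hp
      exact ⟨(i, n-1-i), ⟨⟨by omega, by omega⟩, by omega⟩, by rw [h3]⟩
  -- points of S are not the vertex
  have hSnotV : ∀ p ∈ S, p ≠ (a 0, b 0) := by
    intro p hp
    simp only [hSdef, Finset.mem_union] at hp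
    rcases hp with (hp | hp) | hp
    · obtain ⟨i, h1, h2, h3⟩ := hBmem p hp
      rw [h3]
      intro h
      have := ha 0 i (by omega) (by omega)
      have := congrArg Prod.fst h
      simp at this
      linarith
    · obtain ⟨j, h1, h2, h3⟩ := hCmem p hp
      rw [h3]
      intro h
      have := hb 0 j (by omega) (by omega)
      have := congrArg Prod.snd h
      simp at this
      linarith
    · obtain ⟨i, h1, h3⟩ := hDmem p hp
      rw [h3]
      intro h
      rcases Nat.eq_zero_or_pos i with hi0 | hi0
      · have := hb 0 (n-1-i) (by omega) (by omega)
        have h2 := congrArg Prod.snd h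
        simp at h2
        linarith
      · have := ha 0 i (by omega) (by omega)
        have h2 := congrArg Prod.fst h
        simp at h2
        linarith
  -- each line of L covers at most 2 points of S
  have hkey : ∀ l ∈ L, (S.filter (fun p => IsOnLine l p)).card ≤ 2 := by
    intro l hl
    obtain ⟨u, v, c⟩ := l
    have hmiss' : ¬ (u * a 0 + v * b 0 = c) := hmiss _ hl
    by_cases hu : u = 0
    · have hv : v ≠ 0 := by
        have := hL _ hl
        simp only [hu, ne_eq, Prod.mk.injEq] at this
        tauto
      subst hu
      have hBf : B.filter (fun p => IsOnLine (0, v, c) p) = ∅ := by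
        rw [Finset.eq_empty_iff_forall_notMem]
        intro p hp
        rw [Finset.mem_filter] at hp
        obtain ⟨i, h1, h2, h3⟩ := hBmem p hp.1
        have := hp.2
        rw [h3] at this
        simp only [IsOnLine] at this hmiss'
        simp at this hmiss'
        exact hmiss' this
      have hCf : (C.filter (fun p => IsOnLine (0, v, c) p)).card ≤ 1 := by
        rw [Finset.card_le_one]
        intro p hp q hq
        rw [Finset.mem_filter] at hp hq
        obtain ⟨j, h1, h2, h3⟩ := hCmem p hp.1
        obtain ⟨j', h1', h2', h3'⟩ := hCmem q hq.1
        have e1 := hp.2; have e2 := hq.2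
        rw [h3] at e1; rw [h3'] at e2
        simp only [IsOnLine] at e1 e2
        simp at e1 e2
        have : b j = b j' := by
          have : v * b j = v * b j' := by rw [e1, e2]
          exact mul_left_cancel₀ hv this
        rw [h3, h3', this]
      have hDf : (D.filter (fun p => IsOnLine (0, v, c) p)).card ≤ 1 := by
        rw [Finset.card_le_one]
        intro p hp q hq
        rw [Finset.mem_filter] at hp hq
        obtain ⟨i, h1, h3⟩ := hDmem p hp.1
        obtain ⟨i', h1', h3'⟩ := hDmem q hq.1
        have e1 := hp.2; have e2 := hq.2
        rw [h3] at e1; rw [h3'] at e2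
        simp only [IsOnLine] at e1 e2
        simp at e1 e2
        have hbe : b (n-1-i) = b (n-1-i') := by
          have : v * b (n-1-i) = v * b (n-1-i') := by rw [e1, e2]
          exact mul_left_cancel₀ hv this
        have : n - 1 - i = n - 1 - i' := hbinj _ _ (by omega) (by omega) hbe
        have : i = i' := by omega
        rw [h3, h3', this]
      calc (S.filter (fun p => IsOnLine (0, v, c) p)).card
          = ((B.filter _ ∪ C.filter _) ∪ D.filter _).card := by
            rw [hSdef, Finset.filter_union, Finset.filter_union]
        _ ≤ (B.filter _ ∪ C.filter _).card + (D.filter _).card := Finset.card_union_le _ _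
        _ ≤ ((B.filter _).card + (C.filter _).card) + (D.filter _).card := by
            exact Nat.add_le_add_right (Finset.card_union_le _ _) _
        _ ≤ (0 + 1) + 1 := by
            refine Nat.add_le_add (Nat.add_le_add ?_ hCf) hDf
            rw [hBf]; simp
        _ ≤ 2 := by norm_num
    · by_cases hv : v = 0
      · subst hv
        have hCf : C.filter (fun p => IsOnLine (u, 0, c) p) = ∅ := by
          rw [Finset.eq_empty_iff_forall_notMem]
          intro p hp
          rw [Finset.mem_filter] at hp
          obtain ⟨j, h1, h2, h3⟩ := hCmem p hp.1
          have := hp.2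
          rw [h3] at this
          simp only [IsOnLine] at this hmiss'
          simp at this hmiss'
          exact hmiss' this
        have hBf : (B.filter (fun p => IsOnLine (u, 0, c) p)).card ≤ 1 := by
          rw [Finset.card_le_one]
          intro p hp q hq
          rw [Finset.mem_filter] at hp hq
          obtain ⟨i, h1, h2, h3⟩ := hBmem p hp.1
          obtain ⟨i', h1', h2', h3'⟩ := hBmem q hq.1
          have e1 := hp.2; have e2 := hq.2
          rw [h3] at e1; rw [h3'] at e2
          simp only [IsOnLine] at e1 e2
          simp at e1 e2
          have : a i = a i' := by
            have : u * a i = u * a i' := by rw [e1, e2]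
            exact mul_left_cancel₀ hu this
          rw [h3, h3', this]
        have hDf : (D.filter (fun p => IsOnLine (u, 0, c) p)).card ≤ 1 := by
          rw [Finset.card_le_one]
          intro p hp q hq
          rw [Finset.mem_filter] at hp hq
          obtain ⟨i, h1, h3⟩ := hDmem p hp.1
          obtain ⟨i', h1', h3'⟩ := hDmem q hq.1
          have e1 := hp.2; have e2 := hq.2
          rw [h3] at e1; rw [h3'] at e2
          simp only [IsOnLine] at e1 e2
          simp at e1 e2
          have hae : a i = a i' := by
            have : u * a i = u * a i' := by rw [e1, e2]
            exact mul_left_cancel₀ hu this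
          have : i = i' := hainj _ _ h1 h1' hae
          rw [h3, h3', this]
        calc (S.filter (fun p => IsOnLine (u, 0, c) p)).card
            = ((B.filter _ ∪ C.filter _) ∪ D.filter _).card := by
              rw [hSdef, Finset.filter_union, Finset.filter_union]
          _ ≤ (B.filter _ ∪ C.filter _).card + (D.filter _).card := Finset.card_union_le _ _
          _ ≤ ((B.filter _).card + (C.filter _).card) + (D.filter _).card := by
              exact Nat.add_le_add_right (Finset.card_union_le _ _) _
          _ ≤ (1 + 0) + 1 := by
              refine Nat.add_le_add (Nat.add_le_add hBf ?_) hDf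
              rw [hCf]; simp
          _ ≤ 2 := by norm_num
      · -- generic line
        have hsub : S.filter (fun p => IsOnLine (u, v, c) p) ⊆
            H.filter (fun p => u * p.1 + v * p.2 = c) := by
          intro p hp
          rw [Finset.mem_filter] at hp ⊢
          exact ⟨hSsubH hp.1, hp.2⟩
        exact le_trans (Finset.card_le_card hsub) (hgen u v c hu hv)
  -- double counting
  have hswap : ∀ M : Multiset (ℝ × ℝ × ℝ),
      (∑ p ∈ S, M.countP (fun l => IsOnLine l p)) =
        (M.map (fun l => (S.filter (fun p => IsOnLine l p)).card)).sum := by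
    intro M
    induction M using Multiset.induction with
    | empty => simp
    | cons l M ih =>
      simp only [Multiset.countP_cons, Multiset.map_cons, Multiset.sum_cons,
        Finset.sum_add_distrib, ih]
      rw [add_comm]
      congr 1
      rw [Finset.card_filter]
  -- cardinality of S
  have hBcard : B.card = n - 1 := by
    rw [hBdef, Finset.card_image_of_injOn, Nat.card_Icc]
    · omega
    · intro i hi j hj hij
      simp only [Finset.coe_Icc, Set.mem_Icc] at hi hj
      simp only [Prod.mk.injEq] at hij
      exact hainj i j (by omega) (by omega) hij.1
  have hCcard : C.card = n - 1 := by
    rw [hCdef, Finset.card_image_of_injOn, Nat.card_Icc]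
    · omega
    · intro i hi j hj hij
      simp only [Finset.coe_Icc, Set.mem_Icc] at hi hj
      simp only [Prod.mk.injEq] at hij
      exact hbinj i j (by omega) (by omega) hij.2
  have hDcard : D.card = n := by
    rw [hDdef, Finset.card_image_of_injOn, Finset.card_range]
    intro i hi j hj hij
    simp only [Finset.coe_range, Set.mem_Iio] at hi hj
    simp only [Prod.mk.injEq] at hij
    exact hainj i j hi hj hij.1
  have hdisjBC : Disjoint B C := by
    rw [Finset.disjoint_left]
    intro p hp hp'
    obtain ⟨i, h1, h2, h3⟩ := hBmem p hp
    obtain ⟨j, h1', h2', h3'⟩ := hCmem p hp'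
    rw [h3] at h3'
    simp only [Prod.mk.injEq] at h3'
    have := ha 0 i (by omega) (by omega)
    linarith [h3'.1]
  have hinter : (B ∪ C) ∩ D ⊆ {(a (n-1), b 0), (a 0, b (n-1))} := by
    intro p hp
    rw [Finset.mem_inter, Finset.mem_union] at hp
    obtain ⟨hp1, hp2⟩ := hp
    obtain ⟨i, h1, h3⟩ := hDmem p hp2
    rcases hp1 with hp1 | hp1
    · obtain ⟨i', h1', h2', h3'⟩ := hBmem p hp1
      rw [h3] at h3'
      simp only [Prod.mk.injEq] at h3'
      have : n - 1 - i = 0 := hbinj _ _ (by omega) (by omega) h3'.2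
      have : i = n - 1 := by omega
      simp only [Finset.mem_insert, Finset.mem_singleton]
      left
      rw [h3, this]
      simp
    · obtain ⟨j', h1', h2', h3'⟩ := hCmem p hp1
      rw [h3] at h3'
      simp only [Prod.mk.injEq] at h3'
      have : i = 0 := hainj _ _ (by omega) (by omega) h3'.1
      simp only [Finset.mem_insert, Finset.mem_singleton]
      right
      rw [h3, this]
      simp
  have hScard : 3 * n - 4 ≤ S.card := by
    have h1 : (B ∪ C).card = 2 * n - 2 := by
      rw [Finset.card_union_of_disjoint hdisjBC, hBcard, hCcard]; omega
    have h2 := Finset.card_union_add_card_inter (B ∪ C) D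
    have h3 : ((B ∪ C) ∩ D).card ≤ 2 := by
      refine le_trans (Finset.card_le_card hinter) ?_
      exact le_trans (Finset.card_insert_le _ _) (by simp)
    rw [h1, hDcard] at h2
    have : S.card = (B ∪ C ∪ D).card := by rw [hSdef]
    omega
  -- put everything together
  have hmain : k * (3 * n - 4) ≤ 2 * Multiset.card L := by
    have step1 : k * S.card ≤ ∑ p ∈ S, L.countP (fun l => IsOnLine l p) := by
      calc k * S.card = ∑ _p ∈ S, k := by rw [Finset.sum_const, smul_eq_mul, mul_comm]
        _ ≤ _ := Finset.sum_le_sum (fun p hp => hcover p (hSsubH hp) (hSnotV p hp))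
    have step2 : (L.map (fun l => (S.filter (fun p => IsOnLine l p)).card)).sum ≤
        2 * Multiset.card L := by
      have := Multiset.sum_le_card_nsmul
        (L.map (fun l => (S.filter (fun p => IsOnLine l p)).card)) 2 (by
          intro x hx
          rw [Multiset.mem_map] at hx
          obtain ⟨l, hl, rfl⟩ := hx
          exact hkey l hl)
      rw [Multiset.card_map] at this
      simpa [smul_eq_mul, mul_comm] using this
    have := hswap L
    have hk3 : k * (3 * n - 4) ≤ k * S.card := Nat.mul_le_mul_left k hScard
    omega
  -- convert to ℝ
  have hcast : (k : ℝ) * (3 * n - 4) ≤ 2 * (Multiset.card L : ℝ) := by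
    have := (Nat.cast_le (α := ℝ)).mpr hmain
    push_cast [Nat.cast_sub (by omega : 4 ≤ 3 * n)] at this
    linarith
  linarith
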